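/- Let Φ ∈ ℝ^{M×N} satisfy the null space condition and have pairwise distinct columns (φ_n ≠ φ_{n'} for all n ≠ n' in {1,…,N}). Let λ, λ' ∈ ℝ^N be entrywise nonnegative. If P(C_u|λ) = P(C_u|λ') for every u ∈ ℤ₊^N, then λ = λ'. -/

import Mathlib

open scoped BigOperators

/-- Poisson probability mass `P(x|λ) = ∏ n, e^{-λ_n} λ_n^{x_n} / x_n!`. -/
noncomputable def poissonPMF {N : ℕ} (lam : Fin N → ℝ) (x : Fin N → ℕ) : ℝ :=
  ∏ n, Real.exp (-lam n) * lam n ^ x n / (Nat.factorial (x n) : ℝ)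

/-- Collision set `C_u = {x ∈ ℤ₊^N : Φx = Φu}`. -/
def collisionSet {M N : ℕ} (Φ : Matrix (Fin M) (Fin N) ℝ) (u : Fin N → ℕ) :
    Set (Fin N → ℕ) :=
  {x | Φ.mulVec (fun n => (x n : ℝ)) = Φ.mulVec (fun n => (u n : ℝ))}

/-- Probability mass of a collision set, `P(C_u|λ) = Σ_{x ∈ C_u} P(x|λ)`. -/
noncomputable def collisionMass {M N : ℕ} (Φ : Matrix (Fin M) (Fin N) ℝ)
    (u : Fin N → ℕ) (lam : Fin N → ℝ) : ℝ :=
  ∑' x : collisionSet Φ u, poissonPMF lam (x : Fin N → ℕ)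

namespace Stmt0Aux

/-- The "monomial" part of the Poisson mass. -/
noncomputable def mono {N : ℕ} (lam : Fin N → ℝ) (x : Fin N → ℕ) : ℝ :=
  ∏ n, lam n ^ x n / (Nat.factorial (x n) : ℝ)

lemma poissonPMF_eq {N : ℕ} (lam : Fin N → ℝ) (x : Fin N → ℕ) :
    poissonPMF lam x = Real.exp (-∑ n, lam n) * mono lam x := by
  unfold poissonPMF mono
  have h : ∀ n : Fin N, Real.exp (-lam n) * lam n ^ x n / (Nat.factorial (x n) : ℝ)
      = Real.exp (-lam n) * (lam n ^ x n / (Nat.factorial (x n) : ℝ)) := fun n => by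
    ring
  rw [Finset.prod_congr rfl fun n _ => h n, Finset.prod_mul_distrib, ← Real.exp_sum]
  congr 1
  simp

/-- Existence of a strictly positive linear functional on the columns. -/
lemma exists_pos_functional {M N : ℕ} (Φ : Matrix (Fin M) (Fin N) ℝ)
    (hns : ∀ v : Fin N → ℝ, (∀ n, 0 ≤ v n) → Φ.mulVec v = 0 → v = 0)
    (hcols : ∀ n n' : Fin N, n ≠ n' → (fun m => Φ m n) ≠ (fun m => Φ m n')) :
    ∃ f : (Fin M → ℝ) →L[ℝ] ℝ, ∀ n, 0 < f (fun m => Φ m n) := by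
  classical
  set col : Fin N → (Fin M → ℝ) := fun n m => Φ m n with hcoldef
  set s : Finset (Fin M → ℝ) := Finset.image col Finset.univ with hs
  have hinj : Function.Injective col := by
    intro n n' hnn'
    by_contra hne
    exact hcols n n' hne hnn'
  have hmem : ∀ n, col n ∈ s := fun n => Finset.mem_image_of_mem col (Finset.mem_univ n)
  have h0 : (0 : Fin M → ℝ) ∉ convexHull ℝ (s : Set (Fin M → ℝ)) := by
    rw [Finset.convexHull_eq]
    rintro ⟨w, hw0, hw1, hwc⟩
    rw [Finset.centerMass_eq_of_sum_1 _ _ hw1] at hwc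
    set v : Fin N → ℝ := fun n => w (col n) with hv
    have hveq : Φ.mulVec v = 0 := by
      have hmv : Φ.mulVec v = ∑ n, v n • col n := by
        funext m
        simp [Matrix.mulVec, dotProduct, Finset.sum_apply, mul_comm, hcoldef]
      rw [hmv, ← hwc, hs, Finset.sum_image (fun a _ b _ hab => hinj hab)]
      simp [hv]
    have hv0 : v = 0 := hns v (fun n => hw0 _ (hmem n)) hveq
    have hcontra : (1:ℝ) = 0 := by
      rw [← hw1, hs, Finset.sum_image (fun a _ b _ hab => hinj hab)]
      have hz : ∀ n : Fin N, w (col n) = 0 := fun n => congrFun hv0 n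
      simp [hz]
    norm_num at hcontra
  obtain ⟨f, u0, hf0, hfb⟩ := geometric_hahn_banach_point_closed
    (convex_convexHull ℝ _) ((s : Set (Fin M → ℝ)).toFinite.isClosed_convexHull ℝ) h0
  refine ⟨f, fun n => ?_⟩
  have h1 : (0:ℝ) < u0 := by simpa using hf0
  have h2 := hfb (col n) (subset_convexHull ℝ _ (hmem n))
  exact lt_trans h1 h2

end Stmt0Aux

/-- identifiability of mixture weights under the null space condition
and pairwise distinct columns. -/
theorem stmt_0 {M N : ℕ}
    (Φ : Matrix (Fin M) (Fin N) ℝ)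
    (hns : ∀ v : Fin N → ℝ, (∀ n, 0 ≤ v n) → Φ.mulVec v = 0 → v = 0)
    (hcols : ∀ n n' : Fin N, n ≠ n' → (fun m => Φ m n) ≠ (fun m => Φ m n'))
    (lam lam' : Fin N → ℝ)
    (hlam : ∀ n, 0 ≤ lam n) (hlam' : ∀ n, 0 ≤ lam' n)
    (h : ∀ u : Fin N → ℕ, collisionMass Φ u lam = collisionMass Φ u lam') :
    lam = lam' := by
  classical
  obtain ⟨f, hf⟩ := Stmt0Aux.exists_pos_functional Φ hns hcols
  set a : Fin N → ℝ := fun n => f (fun m => Φ m n) with hadef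
  have hapos : ∀ n, 0 < a n := hf
  have fdot : ∀ x : Fin N → ℕ, f (Φ.mulVec (fun n => (x n : ℝ))) = ∑ n, (x n : ℝ) * a n := by
    intro x
    have hmv : Φ.mulVec (fun n => (x n : ℝ)) = ∑ n, (x n : ℝ) • (fun m => Φ m n) := by
      funext m
      simp [Matrix.mulVec, dotProduct, Finset.sum_apply, mul_comm]
    rw [hmv, map_sum]
    simp [hadef, smul_eq_mul]
  have hdotmem : ∀ u : Fin N → ℕ, ∀ x ∈ collisionSet Φ u,
      ∑ n, (x n : ℝ) * a n = ∑ n, (u n : ℝ) * a n := by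
    intro u x hx
    have hfx := congrArg f hx
    rwa [fdot, fdot] at hfx
  have hfin : ∀ u : Fin N → ℕ, (collisionSet Φ u).Finite := by
    intro u
    set c : ℝ := ∑ n, (u n : ℝ) * a n with hc
    apply Set.Finite.subset (Set.Finite.pi (fun n => Set.finite_Iic (⌈c / a n⌉₊)))
    intro x hx
    rw [Set.mem_pi]
    intro n _
    have hterm : (x n : ℝ) * a n ≤ c := by
      rw [hc, ← hdotmem u x hx]
      exact Finset.single_le_sum
        (fun k _ => mul_nonneg (Nat.cast_nonneg _) (hapos k).le) (Finset.mem_univ n)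
    have h1 : (x n : ℝ) ≤ c / a n := (le_div_iff₀ (hapos n)).2 hterm
    have h2 : (x n : ℝ) ≤ (⌈c / a n⌉₊ : ℝ) := h1.trans (Nat.le_ceil _)
    exact_mod_cast h2
  have mass_eq : ∀ (u : Fin N → ℕ) (μ : Fin N → ℝ),
      collisionMass Φ u μ
        = Real.exp (-∑ n, μ n) * ∑ x ∈ (hfin u).toFinset, Stmt0Aux.mono μ x := by
    intro u μ
    unfold collisionMass
    haveI := (hfin u).fintype
    rw [tsum_fintype, Finset.mul_sum]
    rw [← Finset.sum_subtype ((hfin u).toFinset)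
      (fun x => (hfin u).mem_toFinset) (fun x => poissonPMF μ x)]
    exact Finset.sum_congr rfl fun x _ => Stmt0Aux.poissonPMF_eq μ x
  have hzero : collisionSet Φ (fun _ => 0) = {(fun _ => 0 : Fin N → ℕ)} := by
    ext x
    simp only [collisionSet, Set.mem_setOf_eq, Set.mem_singleton_iff]
    constructor
    · intro hx
      have h0 : (fun n => (((fun _ => 0 : Fin N → ℕ) n : ℕ) : ℝ)) = (0 : Fin N → ℝ) := by
        funext n; simp
      rw [h0, Matrix.mulVec_zero] at hx
      have hv0 := hns (fun n => (x n : ℝ)) (fun n => Nat.cast_nonneg _) hx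
      funext n
      have hcf := congrFun hv0 n
      simp only [Pi.zero_apply, Nat.cast_eq_zero] at hcf
      exact hcf
    · rintro rfl; rfl
  have hsum : ∑ n, lam n = ∑ n, lam' n := by
    have h0 := h (fun _ => 0)
    rw [mass_eq, mass_eq] at h0
    have htf : (hfin (fun _ => 0)).toFinset = {(fun _ => 0 : Fin N → ℕ)} := by
      ext x
      simp only [Set.Finite.mem_toFinset, hzero, Set.mem_singleton_iff, Finset.mem_singleton]
    rw [htf] at h0
    simp only [Finset.sum_singleton, Stmt0Aux.mono, pow_zero, Nat.factorial_zero,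
      Nat.cast_one, div_one, Finset.prod_const_one, mul_one] at h0
    have := Real.exp_injective h0
    linarith
  have hS : ∀ u : Fin N → ℕ, ∑ x ∈ (hfin u).toFinset, Stmt0Aux.mono lam x
      = ∑ x ∈ (hfin u).toFinset, Stmt0Aux.mono lam' x := by
    intro u
    have hu := h u
    rw [mass_eq, mass_eq, hsum] at hu
    exact mul_left_cancel₀ (Real.exp_ne_zero _) hu
  set e : Fin N → (Fin N → ℕ) := fun n m => if m = n then 1 else 0 with he
  have hmulvec_e : ∀ n, Φ.mulVec (fun m => ((e n m : ℕ) : ℝ)) = fun i => Φ i n := by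
    intro n
    funext i
    simp [Matrix.mulVec, dotProduct, he, apply_ite, mul_ite, mul_one, mul_zero,
      Finset.sum_ite_eq']
  have key : ∀ n : Fin N, (∀ m, a m < a n → lam m = lam' m) → lam n = lam' n := by
    intro n hIH
    have heC : e n ∈ (hfin (e n)).toFinset := by
      rw [Set.Finite.mem_toFinset]
      exact rfl
    have hSn := hS (e n)
    rw [← Finset.add_sum_erase _ _ heC, ← Finset.add_sum_erase _ _ heC] at hSn
    have hmono_e : ∀ μ : Fin N → ℝ, Stmt0Aux.mono μ (e n) = μ n := by
      intro μ
      unfold Stmt0Aux.mono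
      rw [Finset.prod_eq_single n]
      · simp [he]
      · intro m _ hm
        simp [he, hm]
      · intro hn
        exact absurd (Finset.mem_univ n) hn
    have hsum_en : ∑ m, ((e n m : ℕ) : ℝ) * a m = a n := by
      rw [Finset.sum_eq_single n]
      · simp [he]
      · intro m _ hm
        simp [he, hm]
      · intro hn
        exact absurd (Finset.mem_univ n) hn
    have htail : ∀ x ∈ ((hfin (e n)).toFinset).erase (e n),
        Stmt0Aux.mono lam x = Stmt0Aux.mono lam' x := by
      intro x hx
      obtain ⟨hxe, hxC⟩ := Finset.mem_erase.mp hx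
      rw [Set.Finite.mem_toFinset] at hxC
      have hsx : ∑ m, (x m : ℝ) * a m = a n := by
        rw [hdotmem (e n) x hxC, hsum_en]
      have hsupp : ∀ m, x m ≠ 0 → a m < a n := by
        intro m hm
        have hterm : (x m : ℝ) * a m ≤ a n := by
          rw [← hsx]
          exact Finset.single_le_sum
            (fun k _ => mul_nonneg (Nat.cast_nonneg _) (hapos k).le) (Finset.mem_univ m)
        rcases Nat.lt_or_ge (x m) 2 with h2 | h2
        · have hx1 : x m = 1 := by omega
          by_cases hk : ∀ k, k ≠ m → x k = 0
          · have hxm : x = e m := by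
              funext j
              by_cases hj : j = m
              · subst hj; simp [he, hx1]
              · simp [he, hj, hk j hj]
            have hmn : m ≠ n := by
              rintro rfl
              exact hxe hxm
            exfalso
            apply hcols m n hmn
            rw [← hmulvec_e m, ← hmulvec_e n, ← hxm]
            exact hxC
          · push_neg at hk
            obtain ⟨k, hkm, hk0⟩ := hk
            have hk1 : (1 : ℝ) ≤ (x k : ℝ) := by
              exact_mod_cast Nat.one_le_iff_ne_zero.mpr hk0
            have hge : a m + a k ≤ ∑ j, (x j : ℝ) * a j := by
              rw [← Finset.add_sum_erase _ _ (Finset.mem_univ m)]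
              have h1 : a m ≤ (x m : ℝ) * a m := by
                rw [hx1]; norm_num
              have h2' : a k ≤ ∑ j ∈ Finset.univ.erase m, (x j : ℝ) * a j := by
                calc a k ≤ (x k : ℝ) * a k := by nlinarith [hapos k]
                  _ ≤ _ := Finset.single_le_sum (f := fun j => (x j : ℝ) * a j)
                    (fun j _ => mul_nonneg (Nat.cast_nonneg _) (hapos j).le)
                    (Finset.mem_erase.mpr ⟨hkm, Finset.mem_univ k⟩)
              linarith
            rw [hsx] at hge
            linarith [hapos k]
        · have h2' : 2 * a m ≤ (x m : ℝ) * a m := by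
            apply mul_le_mul_of_nonneg_right _ (hapos m).le
            exact_mod_cast h2
          nlinarith [hapos m]
      unfold Stmt0Aux.mono
      apply Finset.prod_congr rfl
      intro m _
      by_cases hm : x m = 0
      · simp [hm]
      · rw [hIH m (hsupp m hm)]
    rw [hmono_e, hmono_e, Finset.sum_congr rfl htail] at hSn
    exact add_right_cancel hSn
  set rank : Fin N → ℕ := fun n => (Finset.univ.filter (fun m => a m < a n)).card with hrankdef
  have hrank : ∀ m n, a m < a n → rank m < rank n := by
    intro m n hmn
    apply Finset.card_lt_card
    have hsub : Finset.univ.filter (fun k => a k < a m)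
        ⊆ Finset.univ.filter (fun k => a k < a n) := by
      intro k hk
      simp only [Finset.mem_filter, Finset.mem_univ, true_and] at hk ⊢
      exact hk.trans hmn
    refine (Finset.ssubset_iff_of_subset hsub).mpr ⟨m, ?_, ?_⟩
    · simp [hmn]
    · simp
  have main : ∀ k : ℕ, ∀ n : Fin N, rank n = k → lam n = lam' n := by
    intro k
    induction k using Nat.strong_induction_on with
    | _ k ih =>
      intro n hn
      apply key n
      intro m hm
      exact ih (rank m) (hn ▸ hrank m n hm) m rfl
  funext n
  exact main (rank n) n rfl
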